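/- arXiv:2211.16144 — 3 statements merged into one kernel-verified Lean document; each statement's English description precedes it below -/
import Mathlib

section
/- Fréchet derivative of the mid-point Lagrangian functional: let L : ℝ^d × ℝ^d → ℝ be differentiable, q : {0,…,N} → ℝ^d, and v : {0,…,N} → ℝ^d a variation (v_0 = v_N = 0). Then the function ε ↦ 𝓛(q + ε v) is differentiable at ε = 0 with derivative Σ_{i=1}^{N−1} h·⟨ (1/2)(∂L/∂q(★_{i+½}) + ∂L/∂q(★_{i−½})) − (1/h)(∂L/∂v(★_{i+½}) − ∂L/∂v(★_{i−½})), v_i ⟩. -/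
open scoped RealInnerProductSpace

/-- Gradient of `L` in its first (position) variable. -/
noncomputable def gradq (d : ℕ)
    (L : EuclideanSpace ℝ (Fin d) × EuclideanSpace ℝ (Fin d) → ℝ)
    (a b : EuclideanSpace ℝ (Fin d)) : EuclideanSpace ℝ (Fin d) :=
  gradient (fun x => L (x, b)) a

/-- Gradient of `L` in its second (velocity) variable. -/
noncomputable def gradv (d : ℕ)
    (L : EuclideanSpace ℝ (Fin d) × EuclideanSpace ℝ (Fin d) → ℝ)
    (a b : EuclideanSpace ℝ (Fin d)) : EuclideanSpace ℝ (Fin d) :=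
  gradient (fun y => L (a, y)) b

lemma key_deriv (d : ℕ)
    (L : EuclideanSpace ℝ (Fin d) × EuclideanSpace ℝ (Fin d) → ℝ)
    (hL : Differentiable ℝ L) (a b p w : EuclideanSpace ℝ (Fin d)) :
    HasDerivAt (fun ε : ℝ => L (a + ε • p, b + ε • w))
      (⟪gradq d L a b, p⟫ + ⟪gradv d L a b, w⟫) 0 := by
  have h1 : HasDerivAt (fun ε : ℝ => (a + ε • p, b + ε • w)) (p, w) 0 := by
    have hp : HasDerivAt (fun ε : ℝ => a + ε • p) p 0 := by
      simpa using (((hasDerivAt_id (0:ℝ)).smul_const p).const_add a)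
    have hw : HasDerivAt (fun ε : ℝ => b + ε • w) w 0 := by
      simpa using (((hasDerivAt_id (0:ℝ)).smul_const w).const_add b)
    exact hp.prodMk hw
  have hF : HasFDerivAt L (fderiv ℝ L (a, b)) ((fun ε : ℝ => (a + ε • p, b + ε • w)) 0) := by
    simpa using (hL (a, b)).hasFDerivAt
  have h2' : HasDerivAt (fun ε : ℝ => L (a + ε • p, b + ε • w))
      ((fderiv ℝ L (a, b)) (p, w)) 0 := hF.comp_hasDerivAt 0 h1
  convert h2' using 1
  have hfx : HasFDerivAt (fun x : EuclideanSpace ℝ (Fin d) => L (x, b))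
      ((fderiv ℝ L (a, b)).comp
        ((ContinuousLinearMap.id ℝ (EuclideanSpace ℝ (Fin d))).prod 0)) a :=
    (hL (a, b)).hasFDerivAt.comp a ((hasFDerivAt_id a).prodMk (hasFDerivAt_const b a))
  have hfy : HasFDerivAt (fun y : EuclideanSpace ℝ (Fin d) => L (a, y))
      ((fderiv ℝ L (a, b)).comp
        ((0 : EuclideanSpace ℝ (Fin d) →L[ℝ] EuclideanSpace ℝ (Fin d)).prod
          (ContinuousLinearMap.id ℝ (EuclideanSpace ℝ (Fin d))))) b :=
    (hL (a, b)).hasFDerivAt.comp b ((hasFDerivAt_const a b).prodMk (hasFDerivAt_id b))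
  have e1 : ⟪gradq d L a b, p⟫ = fderiv ℝ L (a, b) (p, 0) := by
    rw [gradq, gradient, InnerProductSpace.toDual_symm_apply, hfx.fderiv]; rfl
  have e2 : ⟪gradv d L a b, w⟫ = fderiv ℝ L (a, b) (0, w) := by
    rw [gradv, gradient, InnerProductSpace.toDual_symm_apply, hfy.fderiv]; rfl
  rw [e1, e2, ← map_add]
  congr 1
  simp [Prod.ext_iff]

/-- Fréchet derivative of the mid-point discrete Lagrangian
functional `𝓛(q) = Σ_{i=0}^{N-1} h·L(★_{i+½})` at `q` in the direction of a
variation `v` (with `v 0 = v N = 0`). -/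
theorem frechet_derivative_midpoint_lagrangian
    (d N : ℕ) (hN : 2 ≤ N) (h : ℝ) (hh : 0 < h)
    (L : EuclideanSpace ℝ (Fin d) × EuclideanSpace ℝ (Fin d) → ℝ)
    (hL : Differentiable ℝ L)
    (q v : ℕ → EuclideanSpace ℝ (Fin d))
    (hv0 : v 0 = 0) (hvN : v N = 0) :
    HasDerivAt
      (fun ε : ℝ => ∑ i ∈ Finset.range N,
        h * L ((2 : ℝ)⁻¹ • ((q (i + 1) + ε • v (i + 1)) + (q i + ε • v i)),
               h⁻¹ • ((q (i + 1) + ε • v (i + 1)) - (q i + ε • v i))))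
      (∑ i ∈ Finset.Icc 1 (N - 1),
        h * ⟪(2 : ℝ)⁻¹ •
              (gradq d L ((2 : ℝ)⁻¹ • (q (i + 1) + q i)) (h⁻¹ • (q (i + 1) - q i))
               + gradq d L ((2 : ℝ)⁻¹ • (q i + q (i - 1))) (h⁻¹ • (q i - q (i - 1))))
            - h⁻¹ •
              (gradv d L ((2 : ℝ)⁻¹ • (q (i + 1) + q i)) (h⁻¹ • (q (i + 1) - q i))
               - gradv d L ((2 : ℝ)⁻¹ • (q i + q (i - 1))) (h⁻¹ • (q i - q (i - 1)))),
            v i⟫)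
      0 := by
  obtain ⟨M, rfl⟩ : ∃ M, N = M + 1 := ⟨N - 1, by omega⟩
  have hM : 1 ≤ M := by omega
  set Gq : ℕ → EuclideanSpace ℝ (Fin d) := fun i =>
    gradq d L ((2 : ℝ)⁻¹ • (q (i + 1) + q i)) (h⁻¹ • (q (i + 1) - q i)) with hGq
  set Gv : ℕ → EuclideanSpace ℝ (Fin d) := fun i =>
    gradv d L ((2 : ℝ)⁻¹ • (q (i + 1) + q i)) (h⁻¹ • (q (i + 1) - q i)) with hGv
  have key : ∀ i : ℕ, HasDerivAt
      (fun ε : ℝ => h * L ((2 : ℝ)⁻¹ • (q (i + 1) + q i) + ε • ((2 : ℝ)⁻¹ • (v (i + 1) + v i)),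
                           h⁻¹ • (q (i + 1) - q i) + ε • (h⁻¹ • (v (i + 1) - v i))))
      (h * (⟪Gq i, (2 : ℝ)⁻¹ • (v (i + 1) + v i)⟫ + ⟪Gv i, h⁻¹ • (v (i + 1) - v i)⟫)) 0 :=
    fun i => (key_deriv d L hL _ _ _ _).const_mul h
  have hsum := HasDerivAt.sum (fun i (_ : i ∈ Finset.range (M + 1)) => key i)
  have hfun : (fun ε : ℝ => ∑ i ∈ Finset.range (M + 1),
        h * L ((2 : ℝ)⁻¹ • ((q (i + 1) + ε • v (i + 1)) + (q i + ε • v i)),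
               h⁻¹ • ((q (i + 1) + ε • v (i + 1)) - (q i + ε • v i))))
      = (fun ε : ℝ => ∑ i ∈ Finset.range (M + 1),
        h * L ((2 : ℝ)⁻¹ • (q (i + 1) + q i) + ε • ((2 : ℝ)⁻¹ • (v (i + 1) + v i)),
               h⁻¹ • (q (i + 1) - q i) + ε • (h⁻¹ • (v (i + 1) - v i)))) := by
    funext ε
    refine Finset.sum_congr rfl fun i _ => ?_
    congr 1
    congr 1
    rw [Prod.mk.injEq]
    constructor <;> module
  rw [hfun]
  convert hsum using 1
  · rfl
  · rfl
  · exact (Finset.sum_fn _ _).symm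
  -- now the value equality
  have expand : ∀ i : ℕ,
      h * (⟪Gq i, (2 : ℝ)⁻¹ • (v (i + 1) + v i)⟫ + ⟪Gv i, h⁻¹ • (v (i + 1) - v i)⟫)
      = (h * ((2:ℝ)⁻¹ * ⟪Gq i, v i⟫ - h⁻¹ * ⟪Gv i, v i⟫))
        + (h * ((2:ℝ)⁻¹ * ⟪Gq i, v (i + 1)⟫ + h⁻¹ * ⟪Gv i, v (i + 1)⟫)) := by
    intro i
    simp only [real_inner_smul_right, inner_add_right, inner_sub_right]
    ring
  rw [Finset.sum_congr rfl fun i _ => expand i, Finset.sum_add_distrib]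
  have hc : (∑ i ∈ Finset.range (M + 1),
      h * ((2:ℝ)⁻¹ * ⟪Gq i, v i⟫ - h⁻¹ * ⟪Gv i, v i⟫))
      = ∑ i ∈ Finset.range M, h * ((2:ℝ)⁻¹ * ⟪Gq (i+1), v (i+1)⟫ - h⁻¹ * ⟪Gv (i+1), v (i+1)⟫) := by
    rw [Finset.sum_range_succ']
    simp [hv0]
  have he : (∑ i ∈ Finset.range (M + 1),
      h * ((2:ℝ)⁻¹ * ⟪Gq i, v (i + 1)⟫ + h⁻¹ * ⟪Gv i, v (i + 1)⟫))
      = ∑ i ∈ Finset.range M, h * ((2:ℝ)⁻¹ * ⟪Gq i, v (i + 1)⟫ + h⁻¹ * ⟪Gv i, v (i + 1)⟫) := by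
    rw [Finset.sum_range_succ]
    simp [hvN]
  rw [hc, he, ← Finset.sum_add_distrib]
  have hIcc : (M + 1 - 1) = M := by omega
  rw [hIcc, ← Finset.Ico_add_one_right_eq_Icc, Finset.sum_Ico_eq_sum_range]
  simp only [Nat.add_sub_cancel]
  refine Finset.sum_congr rfl fun i _ => ?_
  have h1 : 1 + i = i + 1 := by omega
  rw [h1]
  simp only [Nat.add_sub_cancel]
  simp only [inner_sub_left, real_inner_smul_left, inner_add_left, hGq, hGv]
  ring
end

section
/- Discrete mid-point Euler–Lagrange equation: let L : ℝ^d × ℝ^d → ℝ be differentiable and q : {0,…,N} → ℝ^d. Then q is a critical point of the mid-point discrete Lagrangian functional 𝓛 (i.e., for every variation v with v_0 = v_N = 0 the map ε ↦ 𝓛(q + ε v) has derivative 0 at ε = 0) if and only if for every i = 1,…,N−1: (1/2)[∂L/∂q(★_{i+½}) + ∂L/∂q(★_{i−½})] = (1/h)[∂L/∂v(★_{i+½}) − ∂L/∂v(★_{i−½})]. -/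
open scoped RealInnerProductSpace

lemma fderiv_pair (d : ℕ)
    (L : EuclideanSpace ℝ (Fin d) × EuclideanSpace ℝ (Fin d) → ℝ)
    (hL : Differentiable ℝ L) (a b u w : EuclideanSpace ℝ (Fin d)) :
    fderiv ℝ L (a, b) (u, w) = ⟪gradq d L a b, u⟫ + ⟪gradv d L a b, w⟫ := by
  have h1 : HasFDerivAt (fun x => L (x, b))
      ((fderiv ℝ L (a, b)).comp (ContinuousLinearMap.inl ℝ _ _)) a :=
    (hL (a, b)).hasFDerivAt.comp a (hasFDerivAt_prodMk_left a b)
  have h2 : HasFDerivAt (fun y => L (a, y))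
      ((fderiv ℝ L (a, b)).comp (ContinuousLinearMap.inr ℝ _ _)) b :=
    (hL (a, b)).hasFDerivAt.comp b (hasFDerivAt_prodMk_right a b)
  have g1 : ⟪gradq d L a b, u⟫ = fderiv ℝ L (a, b) (u, 0) := by
    rw [gradq, h1.hasGradientAt.gradient, InnerProductSpace.toDual_symm_apply]; rfl
  have g2 : ⟪gradv d L a b, w⟫ = fderiv ℝ L (a, b) (0, w) := by
    rw [gradv, h2.hasGradientAt.gradient, InnerProductSpace.toDual_symm_apply]; rfl
  rw [g1, g2, ← map_add]
  congr 1
  simp [Prod.ext_iff]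

lemma hasDerivAt_term (d : ℕ)
    (L : EuclideanSpace ℝ (Fin d) × EuclideanSpace ℝ (Fin d) → ℝ)
    (hL : Differentiable ℝ L) (h : ℝ) (a b u w : EuclideanSpace ℝ (Fin d)) :
    HasDerivAt (fun ε : ℝ => h * L (a + ε • u, b + ε • w))
      (h * (⟪gradq d L a b, u⟫ + ⟪gradv d L a b, w⟫)) 0 := by
  have hpath : HasDerivAt (fun ε : ℝ => ((a + ε • u, b + ε • w) :
      EuclideanSpace ℝ (Fin d) × EuclideanSpace ℝ (Fin d))) (u, w) 0 := by
    have h1 : HasDerivAt (fun ε : ℝ => a + ε • u) u 0 := by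
      simpa using (((hasDerivAt_id (0:ℝ)).smul_const u).const_add a)
    have h2 : HasDerivAt (fun ε : ℝ => b + ε • w) w 0 := by
      simpa using (((hasDerivAt_id (0:ℝ)).smul_const w).const_add b)
    exact h1.prodMk h2
  have hc := ((hL ((a + (0:ℝ) • u, b + (0:ℝ) • w))).hasFDerivAt.comp_hasDerivAt 0 hpath)
  simp only [zero_smul, add_zero] at hc
  rw [fderiv_pair d L hL] at hc
  exact hc.const_mul h

/-- `(h/2)·∂L/∂q(★_{i+½}) + ∂L/∂v(★_{i+½})`. -/
noncomputable def ELP (d : ℕ)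
    (L : EuclideanSpace ℝ (Fin d) × EuclideanSpace ℝ (Fin d) → ℝ)
    (h : ℝ) (q : ℕ → EuclideanSpace ℝ (Fin d)) (i : ℕ) : EuclideanSpace ℝ (Fin d) :=
  (h/2) • gradq d L ((2:ℝ)⁻¹ • (q (i+1) + q i)) (h⁻¹ • (q (i+1) - q i))
    + gradv d L ((2:ℝ)⁻¹ • (q (i+1) + q i)) (h⁻¹ • (q (i+1) - q i))

/-- `(h/2)·∂L/∂q(★_{i+½}) - ∂L/∂v(★_{i+½})`. -/
noncomputable def ELQ (d : ℕ)
    (L : EuclideanSpace ℝ (Fin d) × EuclideanSpace ℝ (Fin d) → ℝ)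
    (h : ℝ) (q : ℕ → EuclideanSpace ℝ (Fin d)) (i : ℕ) : EuclideanSpace ℝ (Fin d) :=
  (h/2) • gradq d L ((2:ℝ)⁻¹ • (q (i+1) + q i)) (h⁻¹ • (q (i+1) - q i))
    - gradv d L ((2:ℝ)⁻¹ • (q (i+1) + q i)) (h⁻¹ • (q (i+1) - q i))

lemma key_deriv_s5 (d N : ℕ) (h : ℝ) (hh : h ≠ 0)
    (L : EuclideanSpace ℝ (Fin d) × EuclideanSpace ℝ (Fin d) → ℝ)
    (hL : Differentiable ℝ L) (q v : ℕ → EuclideanSpace ℝ (Fin d))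
    (hv0 : v 0 = 0) (hvN : v N = 0) :
    HasDerivAt
      (fun ε : ℝ => ∑ i ∈ Finset.range N,
        h * L ((2 : ℝ)⁻¹ • ((q (i + 1) + ε • v (i + 1)) + (q i + ε • v i)),
               h⁻¹ • ((q (i + 1) + ε • v (i + 1)) - (q i + ε • v i))))
      (∑ j ∈ Finset.range N, ⟪ELP d L h q (j-1) + ELQ d L h q j, v j⟫) 0 := by
  have hterm : ∀ i ∈ Finset.range N,
      HasDerivAt
        (fun ε : ℝ =>
          h * L ((2 : ℝ)⁻¹ • ((q (i + 1) + ε • v (i + 1)) + (q i + ε • v i)),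
                 h⁻¹ • ((q (i + 1) + ε • v (i + 1)) - (q i + ε • v i))))
        (⟪ELP d L h q i, v (i+1)⟫ + ⟪ELQ d L h q i, v i⟫) 0 := by
    intro i _
    have hfun : (fun ε : ℝ =>
          h * L ((2 : ℝ)⁻¹ • ((q (i + 1) + ε • v (i + 1)) + (q i + ε • v i)),
                 h⁻¹ • ((q (i + 1) + ε • v (i + 1)) - (q i + ε • v i))))
        = fun ε : ℝ =>
          h * L ((2:ℝ)⁻¹ • (q (i+1) + q i) + ε • ((2:ℝ)⁻¹ • (v (i+1) + v i)),
                 h⁻¹ • (q (i+1) - q i) + ε • (h⁻¹ • (v (i+1) - v i))) := by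
      funext ε
      have e1 : (2 : ℝ)⁻¹ • ((q (i + 1) + ε • v (i + 1)) + (q i + ε • v i))
          = (2:ℝ)⁻¹ • (q (i+1) + q i) + ε • ((2:ℝ)⁻¹ • (v (i+1) + v i)) := by module
      have e2 : h⁻¹ • ((q (i + 1) + ε • v (i + 1)) - (q i + ε • v i))
          = h⁻¹ • (q (i+1) - q i) + ε • (h⁻¹ • (v (i+1) - v i)) := by module
      rw [e1, e2]
    rw [hfun]
    have hd := hasDerivAt_term d L hL h ((2:ℝ)⁻¹ • (q (i+1) + q i)) (h⁻¹ • (q (i+1) - q i))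
      ((2:ℝ)⁻¹ • (v (i+1) + v i)) (h⁻¹ • (v (i+1) - v i))
    have hc : h * (⟪gradq d L ((2:ℝ)⁻¹ • (q (i+1) + q i)) (h⁻¹ • (q (i+1) - q i)),
          (2:ℝ)⁻¹ • (v (i+1) + v i)⟫
        + ⟪gradv d L ((2:ℝ)⁻¹ • (q (i+1) + q i)) (h⁻¹ • (q (i+1) - q i)),
          h⁻¹ • (v (i+1) - v i)⟫)
        = ⟪ELP d L h q i, v (i+1)⟫ + ⟪ELQ d L h q i, v i⟫ := by
      simp only [ELP, ELQ, inner_add_left, inner_sub_left, inner_add_right, inner_sub_right,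
        real_inner_smul_left, real_inner_smul_right]
      field_simp
      ring
    exact hc ▸ hd
  have hsum := HasDerivAt.fun_sum hterm
  have heq : ∑ i ∈ Finset.range N, (⟪ELP d L h q i, v (i+1)⟫ + ⟪ELQ d L h q i, v i⟫)
      = ∑ j ∈ Finset.range N, ⟪ELP d L h q (j-1) + ELQ d L h q j, v j⟫ := by
    rw [Finset.sum_add_distrib]
    have h1 : ∑ i ∈ Finset.range N, ⟪ELP d L h q i, v (i+1)⟫
        = ∑ j ∈ Finset.range N, ⟪ELP d L h q (j-1), v j⟫ := by
      have e := Finset.sum_range_succ' (fun j => ⟪ELP d L h q (j-1), v j⟫) N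
      rw [Finset.sum_range_succ] at e
      simp only [Nat.add_sub_cancel, hv0, hvN, inner_zero_right, add_zero] at e
      linarith [e]
    rw [h1, ← Finset.sum_add_distrib]
    exact Finset.sum_congr rfl (fun j _ => (inner_add_left _ _ _).symm)
  exact heq ▸ hsum
lemma EL_iff (d : ℕ) (h : ℝ) (hh : h ≠ 0) (A0 A1 B0 B1 : EuclideanSpace ℝ (Fin d)) :
    ((h/2) • A0 + B0) + ((h/2) • A1 - B1) = 0 ↔
      (2:ℝ)⁻¹ • (A1 + A0) = h⁻¹ • (B1 - B0) := by
  have inj := smul_right_injective (EuclideanSpace ℝ (Fin d)) hh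
  constructor
  · intro he
    apply inj
    show h • _ = h • _
    rw [smul_smul, smul_smul, mul_inv_cancel₀ hh, one_smul,
      show h * (2:ℝ)⁻¹ = h/2 by ring]
    rw [← sub_eq_zero, ← he, smul_add]
    abel
  · intro he
    have h2 : h • ((2:ℝ)⁻¹ • (A1 + A0)) = h • (h⁻¹ • (B1 - B0)) := by rw [he]
    rw [smul_smul, smul_smul, mul_inv_cancel₀ hh, one_smul,
      show h * (2:ℝ)⁻¹ = h/2 by ring] at h2
    calc ((h/2) • A0 + B0) + ((h/2) • A1 - B1)
        = (h/2) • (A1 + A0) - (B1 - B0) := by rw [smul_add]; abel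
      _ = 0 := sub_eq_zero_of_eq h2

/-- discrete mid-point Euler–Lagrange equation. `q` is a critical
point of the mid-point discrete Lagrangian functional iff the mid-point
Euler–Lagrange equation holds at all interior indices. -/
theorem discrete_midpoint_euler_lagrange
    (d N : ℕ) (hN : 2 ≤ N) (h : ℝ) (hh : 0 < h)
    (L : EuclideanSpace ℝ (Fin d) × EuclideanSpace ℝ (Fin d) → ℝ)
    (hL : Differentiable ℝ L)
    (q : ℕ → EuclideanSpace ℝ (Fin d)) :
    (∀ v : ℕ → EuclideanSpace ℝ (Fin d), v 0 = 0 → v N = 0 →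
      HasDerivAt
        (fun ε : ℝ => ∑ i ∈ Finset.range N,
          h * L ((2 : ℝ)⁻¹ • ((q (i + 1) + ε • v (i + 1)) + (q i + ε • v i)),
                 h⁻¹ • ((q (i + 1) + ε • v (i + 1)) - (q i + ε • v i))))
        0 0)
    ↔ (∀ i, 1 ≤ i → i ≤ N - 1 →
        (2 : ℝ)⁻¹ •
            (gradq d L ((2 : ℝ)⁻¹ • (q (i + 1) + q i)) (h⁻¹ • (q (i + 1) - q i))
             + gradq d L ((2 : ℝ)⁻¹ • (q i + q (i - 1))) (h⁻¹ • (q i - q (i - 1))))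
          = h⁻¹ •
            (gradv d L ((2 : ℝ)⁻¹ • (q (i + 1) + q i)) (h⁻¹ • (q (i + 1) - q i))
             - gradv d L ((2 : ℝ)⁻¹ • (q i + q (i - 1))) (h⁻¹ • (q i - q (i - 1))))) := by
  have hne : h ≠ 0 := ne_of_gt hh
  constructor
  · intro H i hi1 hi2
    obtain ⟨j, rfl⟩ : ∃ j, i = j + 1 := ⟨i - 1, by omega⟩
    set w := ELP d L h q j + ELQ d L h q (j+1) with hw
    set v : ℕ → EuclideanSpace ℝ (Fin d) := fun k => if k = j + 1 then w else 0 with hv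
    have hv0 : v 0 = 0 := by simp [hv]
    have hvN : v N = 0 := by rw [hv]; simp only; rw [if_neg (by omega)]
    have hk := key_deriv_s5 d N h hne L hL q v hv0 hvN
    have h0 := H v hv0 hvN
    have hc := hk.unique h0
    rw [Finset.sum_eq_single (j+1)] at hc
    · simp only [Nat.add_sub_cancel, hv, if_pos rfl] at hc
      have hw0 : w = 0 := by rwa [inner_self_eq_zero] at hc
      rw [hw, ELP, ELQ] at hw0
      simp only [Nat.add_sub_cancel]
      exact (EL_iff d h hne _ _ _ _).mp hw0
    · intro b _ hb
      rw [hv]; simp only; rw [if_neg hb, inner_zero_right]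
    · intro hnotin
      exact absurd (Finset.mem_range.mpr (by omega)) hnotin
  · intro HEL v hv0 hvN
    have hk := key_deriv_s5 d N h hne L hL q v hv0 hvN
    have hz : (∑ j ∈ Finset.range N,
        ⟪ELP d L h q (j-1) + ELQ d L h q j, v j⟫) = 0 := by
      apply Finset.sum_eq_zero
      intro j hj
      rw [Finset.mem_range] at hj
      match j with
      | 0 => rw [hv0, inner_zero_right]
      | (m+1) =>
        have hEL := HEL (m+1) (by omega) (by omega)
        simp only [Nat.add_sub_cancel] at hEL ⊢
        have h0 : ELP d L h q m + ELQ d L h q (m+1) = 0 := by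
          rw [ELP, ELQ]
          exact (EL_iff d h hne _ _ _ _).mpr hEL
        rw [h0, inner_zero_left]
    exact hz ▸ hk
end

section
/- Order-one discrete Euler–Lagrange equation: let L : ℝ^d × ℝ^d → ℝ be differentiable and define the order-one discrete Lagrangian functional 𝓛_h(q) = Σ_{i=0}^{n−1} h·L(q_i, (q_{i+1} − q_i)/h) for q : {0,…,n} → ℝ^d. Then q is a critical point of 𝓛_h (i.e., for every variation w with w_0 = w_n = 0 the map ε ↦ 𝓛_h(q + ε w) has derivative 0 at ε = 0) if and only if for every i = 1,…,n−1: −(1/h)[∂L/∂v(q_i, (q_{i+1} − q_i)/h) − ∂L/∂v(q_{i−1}, (q_i − q_{i−1})/h)] + ∂L/∂q(q_i, (q_{i+1} − q_i)/h) = 0. -/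
open scoped RealInnerProductSpace

open InnerProductSpace in
lemma fderiv_eq_inner_grad (d : ℕ)
    (L : EuclideanSpace ℝ (Fin d) × EuclideanSpace ℝ (Fin d) → ℝ)
    (hL : Differentiable ℝ L) (a b u v : EuclideanSpace ℝ (Fin d)) :
    fderiv ℝ L (a, b) (u, v) = ⟪gradq d L a b, u⟫ + ⟪gradv d L a b, v⟫ := by
  have hf := (hL (a, b)).hasFDerivAt
  have h1 : HasFDerivAt (fun x : EuclideanSpace ℝ (Fin d) => L (x, b))
      ((fderiv ℝ L (a, b)).comp (ContinuousLinearMap.inl ℝ (EuclideanSpace ℝ (Fin d)) (EuclideanSpace ℝ (Fin d)))) a :=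
    hf.comp a (hasFDerivAt_prodMk_left a b)
  have h2 : HasFDerivAt (fun y : EuclideanSpace ℝ (Fin d) => L (a, y))
      ((fderiv ℝ L (a, b)).comp (ContinuousLinearMap.inr ℝ (EuclideanSpace ℝ (Fin d)) (EuclideanSpace ℝ (Fin d)))) b :=
    hf.comp b (hasFDerivAt_prodMk_right a b)
  have e1 : gradq d L a b =
      (toDual ℝ (EuclideanSpace ℝ (Fin d))).symm ((fderiv ℝ L (a, b)).comp (ContinuousLinearMap.inl ℝ (EuclideanSpace ℝ (Fin d)) (EuclideanSpace ℝ (Fin d)))) := by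
    rw [gradq, gradient, h1.fderiv]
  have e2 : gradv d L a b =
      (toDual ℝ (EuclideanSpace ℝ (Fin d))).symm ((fderiv ℝ L (a, b)).comp (ContinuousLinearMap.inr ℝ (EuclideanSpace ℝ (Fin d)) (EuclideanSpace ℝ (Fin d)))) := by
    rw [gradv, gradient, h2.fderiv]
  rw [e1, e2, toDual_symm_apply, toDual_symm_apply]
  have : (u, v) = (u, (0 : EuclideanSpace ℝ (Fin d))) + ((0 : EuclideanSpace ℝ (Fin d)), v) := by simp
  rw [this, map_add]
  rfl

lemma key_hasDerivAt (d : ℕ)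
    (L : EuclideanSpace ℝ (Fin d) × EuclideanSpace ℝ (Fin d) → ℝ)
    (hL : Differentiable ℝ L) (a b u v : EuclideanSpace ℝ (Fin d)) :
    HasDerivAt (fun ε : ℝ => L (a + ε • u, b + ε • v))
      (⟪gradq d L a b, u⟫ + ⟪gradv d L a b, v⟫) 0 := by
  have hc1 : HasDerivAt (fun ε : ℝ => a + ε • u) u 0 := by
    simpa using ((hasDerivAt_id (0 : ℝ)).smul_const u).const_add a
  have hc2 : HasDerivAt (fun ε : ℝ => b + ε • v) v 0 := by
    simpa using ((hasDerivAt_id (0 : ℝ)).smul_const v).const_add b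
  have hcurve : HasDerivAt (fun ε : ℝ => ((a + ε • u, b + ε • v) : EuclideanSpace ℝ (Fin d) × EuclideanSpace ℝ (Fin d))) (u, v) 0 :=
    hc1.prodMk hc2
  have hfd : HasFDerivAt L (fderiv ℝ L (a, b)) ((fun ε : ℝ => ((a + ε • u, b + ε • v) : EuclideanSpace ℝ (Fin d) × EuclideanSpace ℝ (Fin d))) 0) := by
    simpa using (hL (a, b)).hasFDerivAt
  have := hfd.comp_hasDerivAt 0 hcurve
  rwa [fderiv_eq_inner_grad d L hL a b u v] at this

/-- order-one discrete Euler–Lagrange equation.  `q` is a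
critical point of `𝓛_h(q) = Σ_{i=0}^{n−1} h·L(qᵢ, (qᵢ₊₁ − qᵢ)/h)` iff the
order-one discrete Euler–Lagrange equation holds at all interior indices. -/
theorem discrete_order_one_euler_lagrange
    (d n : ℕ) (hn : 2 ≤ n) (h : ℝ) (hh : 0 < h)
    (L : EuclideanSpace ℝ (Fin d) × EuclideanSpace ℝ (Fin d) → ℝ)
    (hL : Differentiable ℝ L)
    (q : ℕ → EuclideanSpace ℝ (Fin d)) :
    (∀ w : ℕ → EuclideanSpace ℝ (Fin d), w 0 = 0 → w n = 0 →
      HasDerivAt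
        (fun ε : ℝ => ∑ i ∈ Finset.range n,
          h * L (q i + ε • w i,
                 h⁻¹ • ((q (i + 1) + ε • w (i + 1)) - (q i + ε • w i))))
        0 0)
    ↔ (∀ i, 1 ≤ i → i ≤ n - 1 →
        -(h⁻¹ • (gradv d L (q i) (h⁻¹ • (q (i + 1) - q i))
                 - gradv d L (q (i - 1)) (h⁻¹ • (q i - q (i - 1)))))
          + gradq d L (q i) (h⁻¹ • (q (i + 1) - q i)) = 0) := by
  have hne : h ≠ 0 := ne_of_gt hh
  set Gq : ℕ → EuclideanSpace ℝ (Fin d) := fun i => gradq d L (q i) (h⁻¹ • (q (i + 1) - q i)) with hGq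
  set Gv : ℕ → EuclideanSpace ℝ (Fin d) := fun i => gradv d L (q i) (h⁻¹ • (q (i + 1) - q i)) with hGv
  set EL : ℕ → EuclideanSpace ℝ (Fin d) := fun i => -(h⁻¹ • (Gv i - Gv (i - 1))) + Gq i with hEL
  -- derivative of the action along a variation
  have hder : ∀ w : ℕ → EuclideanSpace ℝ (Fin d),
      HasDerivAt
        (fun ε : ℝ => ∑ i ∈ Finset.range n,
          h * L (q i + ε • w i,
                 h⁻¹ • ((q (i + 1) + ε • w (i + 1)) - (q i + ε • w i))))
        (∑ i ∈ Finset.range n,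
          h * (⟪Gq i, w i⟫ + ⟪Gv i, h⁻¹ • (w (i + 1) - w i)⟫)) 0 := by
    intro w
    apply HasDerivAt.fun_sum
    intro i _
    have harg : ∀ ε : ℝ,
        h⁻¹ • ((q (i + 1) + ε • w (i + 1)) - (q i + ε • w i))
          = h⁻¹ • (q (i + 1) - q i) + ε • (h⁻¹ • (w (i + 1) - w i)) := by
      intro ε; module
    have := (key_hasDerivAt d L hL (q i) (h⁻¹ • (q (i + 1) - q i)) (w i)
        (h⁻¹ • (w (i + 1) - w i))).const_mul h
    simpa only [← harg] using this
  -- Abel summation: rewrite the derivative as a sum over interior indices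
  have habel : ∀ w : ℕ → EuclideanSpace ℝ (Fin d), w 0 = 0 → w n = 0 →
      (∑ i ∈ Finset.range n,
          h * (⟪Gq i, w i⟫ + ⟪Gv i, h⁻¹ • (w (i + 1) - w i)⟫))
        = ∑ j ∈ Finset.range (n - 1), h * ⟪EL (j + 1), w (j + 1)⟫ := by
    intro w hw0 hwn
    have hterm : ∀ i, h * (⟪Gq i, w i⟫ + ⟪Gv i, h⁻¹ • (w (i + 1) - w i)⟫)
        = ((h * ⟪Gq i, w i⟫ - ⟪Gv i, w i⟫) + ⟪Gv i, w (i + 1)⟫) := by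
      intro i
      rw [real_inner_smul_right, inner_sub_right]
      field_simp
      ring
    simp only [hterm]
    obtain ⟨m, rfl⟩ : ∃ m, n = m + 1 := ⟨n - 1, by omega⟩
    rw [Finset.sum_add_distrib, Finset.sum_range_succ', Finset.sum_range_succ]
    rw [hw0, hwn]
    simp only [inner_zero_right, mul_zero, sub_zero, add_zero, zero_sub, neg_zero]
    rw [Nat.add_sub_cancel, ← Finset.sum_add_distrib]
    apply Finset.sum_congr rfl
    intro j _
    have hj1 : j + 1 - 1 = j := rfl
    rw [hEL]
    simp only [hj1]
    rw [inner_add_left, inner_neg_left, real_inner_smul_left, inner_sub_left]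
    field_simp
    ring
  constructor
  · -- critical point → EL equations
    intro hcrit i hi1 hi2
    have hiEL : -(h⁻¹ • (gradv d L (q i) (h⁻¹ • (q (i + 1) - q i))
                 - gradv d L (q (i - 1)) (h⁻¹ • (q i - q (i - 1)))))
          + gradq d L (q i) (h⁻¹ • (q (i + 1) - q i)) = EL i := by
      rw [hEL, hGq, hGv]
      have : i - 1 + 1 = i := by omega
      simp only [this]
    rw [hiEL]
    -- choose the delta variation
    set w : ℕ → EuclideanSpace ℝ (Fin d) := fun j => if j = i then EL i else 0 with hw
    have hw0 : w 0 = 0 := by simp [hw]; intro hcon; omega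
    have hwn : w n = 0 := by simp [hw]; intro hcon; omega
    have hS := (hder w).unique (hcrit w hw0 hwn)
    rw [habel w hw0 hwn] at hS
    have hsum : (∑ j ∈ Finset.range (n - 1), h * ⟪EL (j + 1), w (j + 1)⟫)
        = h * ⟪EL i, EL i⟫ := by
      rw [Finset.sum_eq_single (i - 1)]
      · have : i - 1 + 1 = i := by omega
        rw [this, hw]; simp
      · intro j _ hji
        have : j + 1 ≠ i := by omega
        rw [hw]; simp [this]
      · intro hnotmem
        exfalso
        apply hnotmem
        simp only [Finset.mem_range]
        omega
    rw [hsum] at hS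
    have : ⟪EL i, EL i⟫ = 0 := by
      rcases mul_eq_zero.mp hS with h' | h'
      · exact absurd h' hne
      · exact h'
    exact inner_self_eq_zero.mp this
  · -- EL equations → critical point
    intro hEL0 w hw0 hwn
    have hS : (∑ i ∈ Finset.range n,
        h * (⟪Gq i, w i⟫ + ⟪Gv i, h⁻¹ • (w (i + 1) - w i)⟫)) = 0 := by
      rw [habel w hw0 hwn]
      apply Finset.sum_eq_zero
      intro j hj
      simp only [Finset.mem_range] at hj
      have h1 : 1 ≤ j + 1 := by omega
      have h2 : j + 1 ≤ n - 1 := by omega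
      have := hEL0 (j + 1) h1 h2
      have hiEL : EL (j + 1) = 0 := by
        rw [hEL, hGq, hGv]
        simpa using this
      rw [hiEL]
      simp
    have := hder w
    rwa [hS] at this
end
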